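/- Under the early-exit (partial matrix) validation with a fixed execution order, if every test selected by the finer RTS strategy is also selected by the coarser strategy and both strategies only skip tests that would pass, then the first failing test encountered is the same under both strategies, and the number of tests executed by the finer strategy is at most that executed by the coarser strategy. -/

import Mathlib

inductive Outcome | pass | fail
deriving DecidableEq

/-- Number of tests executed by early-exit validation on an ordered list. -/
def execCount {Test : Type*} (result : Test → Outcome) : List Test → ℕ
  | [] => 0
  | t :: L => if result t = .fail then 1 else 1 + execCount result L

/-- With early exit and a fixed order, if the finer safe strategy selects a
subset of the coarser safe strategy's tests and both contain all failing
tests, then the first failing test coincides and the finer strategy executes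
at most as many tests. -/
theorem stmt4 {Test : Type*} (result : Test → Outcome) (L : List Test)
    (S_fine S_coarse : Set Test)
    [DecidablePred (· ∈ S_fine)] [DecidablePred (· ∈ S_coarse)]
    (hsub : S_fine ⊆ S_coarse)
    (hsafe : ∀ t ∈ L, result t = .fail → t ∈ S_fine) :
    (L.filter (· ∈ S_fine)).find? (fun t => result t = Outcome.fail) =
      (L.filter (· ∈ S_coarse)).find? (fun t => result t = Outcome.fail) ∧
    execCount result (L.filter (· ∈ S_fine)) ≤
      execCount result (L.filter (· ∈ S_coarse)) := by
  induction L with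
  | nil => simp
  | cons t L ih =>
    have ih' := ih (fun x hx => hsafe x (List.mem_cons_of_mem _ hx))
    by_cases hf : t ∈ S_fine
    · have hc : t ∈ S_coarse := hsub hf
      by_cases hr : result t = Outcome.fail
      · simp [List.filter_cons, hf, hc, List.find?, hr, execCount]
      · have h2 := ih'.2
        simp [List.filter_cons, hf, hc, List.find?, execCount, hr, -List.find?_filter]
        exact ⟨ih'.1, by omega⟩
    · have hr : result t ≠ Outcome.fail := fun h => hf (hsafe t List.mem_cons_self h)
      by_cases hc : t ∈ S_coarse
      · have h2 := ih'.2
        simp [List.filter_cons, hf, hc, List.find?, execCount, hr, -List.find?_filter]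
        exact ⟨ih'.1, by omega⟩
      · simpa [List.filter_cons, hf, hc] using ih'
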